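/- For integers m_1 ≥ m_2 ≥ 0 one has C(m_1,m_2) = (m_2(2m_1+3)(2m_1+7)(m_2+2))/(4(m_1+2)(m_1+3)(2m_2+1)(2m_2+3)); in particular C(m_1,m_2) = 0 if and only if m_2 = 0. -/

import Mathlib

open Finset

/-- A tuple of integers is dominant if its entries are weakly decreasing and nonnegative. -/
def Dominant {r : ℕ} (m : Fin r → ℤ) : Prop :=
  (∀ j k : Fin r, j ≤ k → m k ≤ m j) ∧ ∀ j : Fin r, 0 ≤ m j

instance {r : ℕ} (m : Fin r → ℤ) : Decidable (Dominant m) := by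
  unfold Dominant; infer_instance

/-- The genus `p = (e+1) + (r-1)d + b/2`. -/
noncomputable def genusP (r : ℕ) (b d e : ℝ) : ℝ := (e + 1) + ((r : ℝ) - 1) * d + b / 2

/-- `n = r(p + b/2)`. -/
noncomputable def dimN (r : ℕ) (b d e : ℝ) : ℝ := r * (genusP r b d e + b / 2)

/-- `ρ_k = (r-k)d/2 + e/2 + b/4` (1-indexed `k`). -/
noncomputable def rho (r : ℕ) (b d e : ℝ) (k : Fin r) : ℝ :=
  ((r : ℝ) - ((k : ℕ) + 1)) * d / 2 + e / 2 + b / 4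

/-- The coefficient `A(m,k)`. -/
noncomputable def Acoef (r : ℕ) (b d e : ℝ) (m : Fin r → ℤ) (k : Fin r) : ℝ :=
  (genusP r b d e / (2 * dimN r b d e)) *
    ((2 * ((m k : ℝ) + rho r b d e k) + b / 2 + 1) *
        (2 * ((m k : ℝ) + rho r b d e k) + b / 2 + e)) /
      ((2 * ((m k : ℝ) + rho r b d e k)) * (2 * ((m k : ℝ) + rho r b d e k) + 1)) *
    ∏ j ∈ univ.erase k,
      ((((m k : ℝ) + rho r b d e k) - ((m j : ℝ) + rho r b d e j) + d / 2) *
          (((m k : ℝ) + rho r b d e k) + ((m j : ℝ) + rho r b d e j) + d / 2)) /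
        ((((m k : ℝ) + rho r b d e k) - ((m j : ℝ) + rho r b d e j)) *
          (((m k : ℝ) + rho r b d e k) + ((m j : ℝ) + rho r b d e j)))

/-- The coefficient `B(m,k)`. -/
noncomputable def Bcoef (r : ℕ) (b d e : ℝ) (m : Fin r → ℤ) (k : Fin r) : ℝ :=
  (genusP r b d e / (2 * dimN r b d e)) *
    ((2 * ((m k : ℝ) + rho r b d e k) - b / 2 - 1) *
        (2 * ((m k : ℝ) + rho r b d e k) - b / 2 - e)) /
      ((2 * ((m k : ℝ) + rho r b d e k)) * (2 * ((m k : ℝ) + rho r b d e k) - 1)) *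
    ∏ j ∈ univ.erase k,
      ((((m k : ℝ) + rho r b d e k) + ((m j : ℝ) + rho r b d e j) - d / 2) *
          (((m k : ℝ) + rho r b d e k) - ((m j : ℝ) + rho r b d e j) - d / 2)) /
        ((((m k : ℝ) + rho r b d e k) + ((m j : ℝ) + rho r b d e j)) *
          (((m k : ℝ) + rho r b d e k) - ((m j : ℝ) + rho r b d e j)))

/-- The coefficient `C(m)`. -/
noncomputable def Ccoef (r : ℕ) (b d e : ℝ) (m : Fin r → ℤ) : ℝ :=
  1 - (∑ k ∈ univ.filter (fun k : Fin r =>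
        Dominant (fun j => m j + if j = k then 1 else 0)), Acoef r b d e m k)
    - (∑ k ∈ univ.filter (fun k : Fin r =>
        Dominant (fun j => m j - if j = k then 1 else 0)), Bcoef r b d e m k)


set_option maxHeartbeats 2000000 in
lemma Hgen_e6 (x y : ℝ) (hy : 0 ≤ y) (hxy : y ≤ x) :
    1 - (3 / 16 * ((2 * (x + 5 / 2) + 2 + 1) * (2 * (x + 5 / 2) + 2)) /
            (2 * (x + 5 / 2) * (2 * (x + 5 / 2) + 1)) *
          ((x + 5 / 2 - (y + 1) + 3 / 2) * (x + 5 / 2 + (y + 1) + 3 / 2) /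
            ((x + 5 / 2 - (y + 1)) * (x + 5 / 2 + (y + 1)))) +
        3 / 16 * ((2 * (y + 1) + 2 + 1) * (2 * (y + 1) + 2)) /
            (2 * (y + 1) * (2 * (y + 1) + 1)) *
          ((y + 1 - (x + 5 / 2) + 3 / 2) * (y + 1 + (x + 5 / 2) + 3 / 2) /
            ((y + 1 - (x + 5 / 2)) * (y + 1 + (x + 5 / 2))))) -
      (3 / 16 * ((2 * (x + 5 / 2) - 2 - 1) * (2 * (x + 5 / 2) - 2)) /
            (2 * (x + 5 / 2) * (2 * (x + 5 / 2) - 1)) *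
          ((x + 5 / 2 + (y + 1) - 3 / 2) * (x + 5 / 2 - (y + 1) - 3 / 2) /
            ((x + 5 / 2 + (y + 1)) * (x + 5 / 2 - (y + 1)))) +
        3 / 16 * ((2 * (y + 1) - 2 - 1) * (2 * (y + 1) - 2)) /
            (2 * (y + 1) * (2 * (y + 1) - 1)) *
          ((y + 1 + (x + 5 / 2) - 3 / 2) * (y + 1 - (x + 5 / 2) - 3 / 2) /
            ((y + 1 + (x + 5 / 2)) * (y + 1 - (x + 5 / 2)))))
    = y * (2 * x + 3) * (2 * x + 7) * (y + 2) /
        (4 * (x + 2) * (x + 3) * (2 * y + 1) * (2 * y + 3)) := by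
  have dA0 : 2 * (x + 5 / 2) * (2 * (x + 5 / 2) + 1) *
      ((x + 5 / 2 - (y + 1)) * (x + 5 / 2 + (y + 1))) ≠ 0 :=
    mul_ne_zero (mul_ne_zero (by linarith : (0:ℝ) < 2 * (x + 5 / 2)).ne'
        (by linarith : (0:ℝ) < 2 * (x + 5 / 2) + 1).ne')
      (mul_ne_zero (by linarith : (0:ℝ) < x + 5 / 2 - (y + 1)).ne'
        (by linarith : (0:ℝ) < x + 5 / 2 + (y + 1)).ne')
  have dA1 : 2 * (y + 1) * (2 * (y + 1) + 1) *
      ((y + 1 - (x + 5 / 2)) * (y + 1 + (x + 5 / 2))) ≠ 0 :=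
    mul_ne_zero (mul_ne_zero (by linarith : (0:ℝ) < 2 * (y + 1)).ne'
        (by linarith : (0:ℝ) < 2 * (y + 1) + 1).ne')
      (mul_ne_zero (by linarith : y + 1 - (x + 5 / 2) < 0).ne
        (by linarith : (0:ℝ) < y + 1 + (x + 5 / 2)).ne')
  have dB0 : 2 * (x + 5 / 2) * (2 * (x + 5 / 2) - 1) *
      ((x + 5 / 2 + (y + 1)) * (x + 5 / 2 - (y + 1))) ≠ 0 :=
    mul_ne_zero (mul_ne_zero (by linarith : (0:ℝ) < 2 * (x + 5 / 2)).ne'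
        (by linarith : (0:ℝ) < 2 * (x + 5 / 2) - 1).ne')
      (mul_ne_zero (by linarith : (0:ℝ) < x + 5 / 2 + (y + 1)).ne'
        (by linarith : (0:ℝ) < x + 5 / 2 - (y + 1)).ne')
  have dB1 : 2 * (y + 1) * (2 * (y + 1) - 1) *
      ((y + 1 + (x + 5 / 2)) * (y + 1 - (x + 5 / 2))) ≠ 0 :=
    mul_ne_zero (mul_ne_zero (by linarith : (0:ℝ) < 2 * (y + 1)).ne'
        (by linarith : (0:ℝ) < 2 * (y + 1) - 1).ne')
      (mul_ne_zero (by linarith : (0:ℝ) < y + 1 + (x + 5 / 2)).ne'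
        (by linarith : y + 1 - (x + 5 / 2) < 0).ne)
  have w0 : 4 * (x + 2) * (x + 3) * (2 * y + 1) * (2 * y + 3) ≠ 0 :=
    mul_ne_zero (mul_ne_zero (mul_ne_zero (mul_ne_zero
      (by norm_num : (4:ℝ) ≠ 0) (by linarith : (0:ℝ) < x + 2).ne')
      (by linarith : (0:ℝ) < x + 3).ne') (by linarith : (0:ℝ) < 2 * y + 1).ne')
      (by linarith : (0:ℝ) < 2 * y + 3).ne'
  rw [div_mul_div_comm, div_mul_div_comm, div_mul_div_comm, div_mul_div_comm,
    div_add_div _ _ dA0 dA1, div_add_div _ _ dB0 dB1, sub_sub,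
    div_add_div _ _ (mul_ne_zero dA0 dA1) (mul_ne_zero dB0 dB1),
    sub_eq_iff_eq_add,
    div_add_div _ _ w0 (mul_ne_zero (mul_ne_zero dA0 dA1) (mul_ne_zero dB0 dB1)),
    eq_comm,
    div_eq_iff (mul_ne_zero w0 (mul_ne_zero (mul_ne_zero dA0 dA1) (mul_ne_zero dB0 dB1)))]
  ring


lemma dom2 (v : Fin 2 → ℤ) : Dominant v ↔ v 1 ≤ v 0 ∧ 0 ≤ v 1 := by
  constructor
  · rintro ⟨h, h'⟩; exact ⟨h 0 1 (by decide), h' 1⟩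
  · rintro ⟨h, h'⟩
    refine ⟨?_, fun j => ?_⟩
    · intro j k hjk; fin_cases j <;> fin_cases k <;> simp_all
    · fin_cases j <;> simp_all; omega

set_option maxHeartbeats 1000000 in
theorem Cm_e6_split (m : Fin 2 → ℤ) (hm : Dominant m) :
    Ccoef 2 4 3 0 m
        = (m 1 : ℝ) * (2 * (m 0 : ℝ) + 3) * (2 * (m 0 : ℝ) + 7) * ((m 1 : ℝ) + 2) /
          (4 * ((m 0 : ℝ) + 2) * ((m 0 : ℝ) + 3) * (2 * (m 1 : ℝ) + 1) * (2 * (m 1 : ℝ) + 3)) ∧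
      (Ccoef 2 4 3 0 m = 0 ↔ m 1 = 0) := by
  obtain ⟨h10, h1⟩ := (dom2 m).1 hm
  have c0 : (0:ℝ) ≤ (m 1 : ℝ) := by exact_mod_cast h1
  have c1 : (m 1 : ℝ) ≤ (m 0 : ℝ) := by exact_mod_cast h10
  have e0 : (univ.erase (0 : Fin 2)) = {1} := by decide
  have e1 : (univ.erase (1 : Fin 2)) = {0} := by decide
  have r0 : rho 2 4 3 0 0 = 5/2 := by norm_num [rho]
  have r1 : rho 2 4 3 0 1 = 1 := by norm_num [rho]
  have hp : genusP 2 4 3 0 = 6 := by norm_num [genusP]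
  have hn : dimN 2 4 3 0 = 16 := by norm_num [dimN, genusP]
  have H := Hgen_e6 (m 0 : ℝ) (m 1 : ℝ) c0 c1
  have hform : Ccoef 2 4 3 0 m
      = (m 1 : ℝ) * (2 * (m 0 : ℝ) + 3) * (2 * (m 0 : ℝ) + 7) * ((m 1 : ℝ) + 2) /
          (4 * ((m 0 : ℝ) + 2) * ((m 0 : ℝ) + 3) * (2 * (m 1 : ℝ) + 1) * (2 * (m 1 : ℝ) + 3)) := by
    rw [Ccoef, Finset.sum_filter, Finset.sum_filter, Fin.sum_univ_two, Fin.sum_univ_two]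
    simp only [dom2, Acoef, Bcoef, e0, e1, Finset.prod_singleton, r0, r1, hp, hn]
    norm_num
    rw [if_pos (by omega : m 1 ≤ m 0 + 1 ∧ 0 ≤ m 1)]
    rcases eq_or_lt_of_le h10 with heq | hlt
    · rw [if_neg (by omega), if_neg (by omega)]
      have hc : (m 1 : ℝ) = (m 0 : ℝ) := by exact_mod_cast heq
      rcases eq_or_lt_of_le h1 with h0 | h0
      · rw [if_neg (by omega)]
        have hcc : (m 0 : ℝ) = 0 := by exact_mod_cast (heq ▸ h0).symm
        rw [hc, hcc] at H ⊢
        have z1 : ((0:ℝ) + 1 - (0 + 5 / 2) + 3 / 2) = 0 := by norm_num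
        have z2 : ((0:ℝ) + 5 / 2 - (0 + 1) - 3 / 2) = 0 := by norm_num
        have z3 : (2 * ((0:ℝ) + 1) - 2) = 0 := by norm_num
        rw [z1, zero_mul, zero_div, mul_zero] at H
        rw [z2, mul_zero, zero_div, mul_zero] at H
        rw [z3, mul_zero, mul_zero, zero_div, zero_mul] at H
        linarith [H]
      · rw [if_pos (by omega : m 1 ≤ m 0 + 1 ∧ 1 ≤ m 1)]
        rw [hc] at H ⊢
        have z1 : ((m 0 : ℝ) + 1 - ((m 0 : ℝ) + 5 / 2) + 3 / 2) = 0 := by ring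
        have z2 : ((m 0 : ℝ) + 5 / 2 - ((m 0 : ℝ) + 1) - 3 / 2) = 0 := by ring
        rw [z1, zero_mul, zero_div, mul_zero] at H
        rw [z2, mul_zero, zero_div, mul_zero] at H
        linarith [H]
    · rw [if_pos (by omega : m 1 < m 0 ∧ 0 ≤ m 1 + 1),
         if_pos (by omega : m 1 < m 0 ∧ 0 ≤ m 1)]
      rcases eq_or_lt_of_le h1 with h0 | h0
      · rw [if_neg (by omega)]
        have hc0 : (m 1 : ℝ) = 0 := by exact_mod_cast h0.symm
        rw [hc0] at H ⊢
        have z3 : (2 * ((0:ℝ) + 1) - 2) = 0 := by norm_num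
        rw [z3, mul_zero, mul_zero, zero_div, zero_mul] at H
        linarith [H]
      · rw [if_pos (by omega : m 1 ≤ m 0 + 1 ∧ 1 ≤ m 1)]
        linarith [H]
  refine ⟨hform, ?_⟩
  rw [hform, div_eq_zero_iff]
  constructor
  · rintro (hnum | hden)
    · have h2 : (0:ℝ) < 2 * (m 0 : ℝ) + 3 := by linarith
      have h3 : (0:ℝ) < 2 * (m 0 : ℝ) + 7 := by linarith
      have h4 : (0:ℝ) < (m 1 : ℝ) + 2 := by linarith
      have : (m 1 : ℝ) = 0 := by
        rcases mul_eq_zero.1 hnum with h | h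
        · rcases mul_eq_zero.1 h with h' | h'
          · rcases mul_eq_zero.1 h' with h'' | h''
            · exact h''
            · exact absurd h'' h2.ne'
          · exact absurd h' h3.ne'
        · exact absurd h h4.ne'
      exact_mod_cast this
    · exfalso
      have hW : (0:ℝ) < 4 * ((m 0 : ℝ) + 2) * ((m 0 : ℝ) + 3) * (2 * (m 1 : ℝ) + 1) * (2 * (m 1 : ℝ) + 3) := by
        apply mul_pos (mul_pos (mul_pos (mul_pos (by norm_num : (0:ℝ) < 4) (by linarith)) (by linarith)) (by linarith)) (by linarith)
      exact hW.ne' hden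
  · intro h
    left
    have h0 : (m 1 : ℝ) = 0 := by exact_mod_cast h
    rw [h0]; ring
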